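/- Let α ∈ (0,2) and let S_* be the subset of ℝ² ≅ ℂ given by S_* = ∪_{n≥0} C_n, where C_n = { n·e^{2πik/(n+1)} : k = 0,1,…,n }. Then there exists a unit flux from the origin 0 ∈ S_* to infinity with finite energy for the resistances r(x,y) = max(1, |x−y|^{2+α}); that is, there exists an antisymmetric function f : S_* × S_* → ℝ such that for every x ∈ S_* the sum Σ_{y∈S_*} f(x,y) converges absolutely and equals 1 if x = 0 and 0 otherwise, and (1/2)·Σ_{x,y∈S_*, x≠y} max(1,|x−y|^{2+α})·f(x,y)² < ∞. (By the Royden–Lyons criterion this expresses that the random walk on S_* with jump weights φ_{p,α}(|x−y|) = min(1,|x−y|^{−2−α}) is transient for all α ∈ (0,2).) -/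

import Mathlib

open Complex

/-- The set `C_n = { n·e^{2πik/(n+1)} : k = 0,…,n } ⊆ ℂ`. -/
noncomputable def circPts (n : ℕ) : Set ℂ :=
  {z : ℂ | ∃ k : ℕ, k ≤ n ∧
    z = (n : ℂ) * Complex.exp (2 * (Real.pi : ℂ) * Complex.I * (k : ℂ) / ((n : ℂ) + 1))}

/-- The set `S_* = ⋃_{n≥0} C_n`. -/
noncomputable def Sstar : Set ℂ := ⋃ n : ℕ, circPts n

noncomputable def pt (n k : ℕ) : ℂ :=
  (n : ℂ) * Complex.exp (2 * (Real.pi : ℂ) * Complex.I * (k : ℂ) / ((n : ℂ) + 1))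

lemma abs_pt (n k : ℕ) : ‖pt n k‖ = n := by
  have harg : 2 * (Real.pi : ℂ) * Complex.I * (k : ℂ) / ((n : ℂ) + 1)
      = ((2 * Real.pi * k / (n + 1) : ℝ) : ℂ) * Complex.I := by
    push_cast
    have : ((n : ℂ) + 1) ≠ 0 := by
      exact_mod_cast (Nat.cast_add_one_ne_zero (R := ℂ) n)
    field_simp
  rw [pt, norm_mul, harg, Complex.norm_exp_ofReal_mul_I, mul_one, Complex.norm_natCast]

lemma pt_mem_Sstar {n k : ℕ} (h : k ≤ n) : pt n k ∈ Sstar := by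
  exact Set.mem_iUnion.2 ⟨n, ⟨k, h, rfl⟩⟩

lemma mem_Sstar_iff {z : ℂ} : z ∈ Sstar ↔ ∃ p : ℕ × ℕ, p.2 ≤ p.1 ∧ z = pt p.1 p.2 := by
  constructor
  · intro hz
    rcases Set.mem_iUnion.1 hz with ⟨n, k, hk, hz⟩
    exact ⟨(n, k), hk, hz⟩
  · rintro ⟨⟨n, k⟩, hk, rfl⟩
    exact pt_mem_Sstar hk

lemma pt_inj {n k k' : ℕ} (hk : k ≤ n) (hk' : k' ≤ n) (h : pt n k = pt n k') : k = k' := by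
  rcases Nat.eq_zero_or_pos n with rfl | hn
  · omega
  have hn0 : (n : ℂ) ≠ 0 := Nat.cast_ne_zero.2 hn.ne'
  have hexp : Complex.exp (2 * (Real.pi : ℂ) * Complex.I * (k : ℂ) / ((n : ℂ) + 1))
      = Complex.exp (2 * (Real.pi : ℂ) * Complex.I * (k' : ℂ) / ((n : ℂ) + 1)) := by
    exact mul_left_cancel₀ hn0 h
  have h1 : Complex.exp (2 * (Real.pi : ℂ) * Complex.I * (k : ℂ) / ((n : ℂ) + 1)
      - 2 * (Real.pi : ℂ) * Complex.I * (k' : ℂ) / ((n : ℂ) + 1)) = 1 := by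
    rw [Complex.exp_sub, hexp, div_self (Complex.exp_ne_zero _)]
  rcases Complex.exp_eq_one_iff.1 h1 with ⟨m, hm⟩
  have hn1 : ((n : ℂ) + 1) ≠ 0 := by
    exact_mod_cast (Nat.cast_add_one_ne_zero (R := ℂ) n)
  have hI : (2 * (Real.pi : ℂ) * Complex.I) ≠ 0 := by
    simp [Real.pi_ne_zero, Complex.I_ne_zero]
  have hkk : (k : ℂ) - (k' : ℂ) = (m : ℂ) * ((n : ℂ) + 1) := by
    apply mul_left_cancel₀ hI
    field_simp at hm
    linear_combination (2 * (Real.pi : ℂ) * Complex.I) * hm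
  have hint : (k : ℤ) - (k' : ℤ) = m * ((n : ℤ) + 1) := by
    exact_mod_cast hkk
  have hm0 : m = 0 := by
    by_contra hm0
    have h1 : 1 ≤ m ∨ m ≤ -1 := by omega
    have hk1 : (k : ℤ) ≤ n := by exact_mod_cast hk
    have hk2 : (k' : ℤ) ≤ n := by exact_mod_cast hk'
    have hk3 : (0 : ℤ) ≤ (k : ℤ) := Int.natCast_nonneg k
    have hk4 : (0 : ℤ) ≤ (k' : ℤ) := Int.natCast_nonneg k'
    have hn' : (1 : ℤ) ≤ n := by exact_mod_cast hn
    rcases h1 with h1 | h1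
    · nlinarith
    · nlinarith
  rw [hm0] at hint
  omega

noncomputable def nn (z : ℂ) : ℕ := ⌊‖z‖⌋₊

lemma nn_pt (n k : ℕ) : nn (pt n k) = n := by
  rw [nn, abs_pt, Nat.floor_natCast]

/-- canonical representative of a point of `Sstar` -/
noncomputable def rep (x : ↥Sstar) : ℕ × ℕ :=
  Classical.choose (mem_Sstar_iff.1 x.2)

lemma rep_spec (x : ↥Sstar) : (rep x).2 ≤ (rep x).1 ∧ (x : ℂ) = pt (rep x).1 (rep x).2 :=
  Classical.choose_spec (mem_Sstar_iff.1 x.2)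

lemma rep_injective : Function.Injective rep := by
  intro x y h
  have hx := (rep_spec x).2
  have hy := (rep_spec y).2
  apply Subtype.ext
  rw [hx, hy, h]

lemma nn_coe (x : ↥Sstar) : nn (x : ℂ) = (rep x).1 := by
  rw [(rep_spec x).2, nn_pt]

lemma abs_coe (x : ↥Sstar) : ‖(x : ℂ)‖ = nn (x : ℂ) := by
  rw [nn_coe, (rep_spec x).2, abs_pt]

noncomputable def lev' (n : ℕ) : ℕ := if n = 0 then 0 else Nat.log 2 n + 1

lemma lt_pow_lev' (n : ℕ) : n < 2 ^ lev' n := by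
  rw [lev']
  split
  · omega
  · exact Nat.lt_pow_succ_log_self one_lt_two n

lemma lev'_eq {m n : ℕ} (h1 : 2 ^ m ≤ n) (h2 : n < 2 ^ (m + 1)) : lev' n = m + 1 := by
  have hn : n ≠ 0 := by have := Nat.one_le_two_pow (n := m); omega
  rw [lev', if_neg hn, Nat.log_eq_of_pow_le_of_lt_pow h1 h2]

lemma lev'_eq_zero_iff {n : ℕ} : lev' n = 0 ↔ n = 0 := by
  rw [lev']; split <;> simp_all

/-- level of a point of `Sstar` -/
noncomputable def levx (x : ↥Sstar) : ℕ := lev' (nn (x : ℂ))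

lemma layer_finite (m : ℕ) : {x : ↥Sstar | levx x = m}.Finite := by
  apply Set.Finite.subset (Set.Finite.preimage (rep_injective.injOn)
    (Set.finite_Iio (2 ^ m) |>.prod (Set.finite_Iio (2 ^ m))))
  intro x hx
  simp only [Set.mem_setOf_eq] at hx
  have h1 : nn (x : ℂ) < 2 ^ m := by rw [← hx]; exact lt_pow_lev' _
  rw [nn_coe] at h1
  have h2 := (rep_spec x).1
  exact ⟨h1, lt_of_le_of_lt h2 h1⟩

/-- layer `m` as a finset -/
noncomputable def Lfin (m : ℕ) : Finset ↥Sstar := (layer_finite m).toFinset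

lemma mem_Lfin {m : ℕ} {x : ↥Sstar} : x ∈ Lfin m ↔ levx x = m := by
  rw [Lfin, Set.Finite.mem_toFinset]; rfl

/-- number of points in layer m -/
noncomputable def NL (m : ℕ) : ℕ := (Lfin m).card

lemma zero_mem_Sstar : (0 : ℂ) ∈ Sstar := by
  have := pt_mem_Sstar (n := 0) (k := 0) le_rfl
  simpa [pt] using this

lemma levx_pt {n k : ℕ} (h : k ≤ n) : levx (⟨pt n k, pt_mem_Sstar h⟩ : ↥Sstar) = lev' n := by
  rw [levx]
  simp only [nn_pt]

lemma NL_pos (m : ℕ) : 0 < NL m := by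
  rcases Nat.eq_zero_or_pos m with rfl | hm
  · refine Finset.card_pos.2 ⟨⟨pt 0 0, pt_mem_Sstar le_rfl⟩, ?_⟩
    rw [mem_Lfin, levx_pt le_rfl]
    simp [lev']
  · obtain ⟨m, rfl⟩ := Nat.exists_eq_add_of_le hm
    refine Finset.card_pos.2 ⟨⟨pt (2 ^ m) 0, pt_mem_Sstar (Nat.zero_le _)⟩, ?_⟩
    rw [mem_Lfin, levx_pt (Nat.zero_le _), lev'_eq le_rfl (by
      have : (2:ℕ) ^ m < 2 ^ (m+1) := by
        exact Nat.pow_lt_pow_right one_lt_two (by omega)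
      exact this)]
    omega

lemma NL_zero : NL 0 = 1 := by
  have h1 : Lfin 0 ⊆ {⟨0, zero_mem_Sstar⟩} := by
    intro x hx
    rw [mem_Lfin, levx, lev'_eq_zero_iff] at hx
    have : ‖(x : ℂ)‖ = 0 := by
      rw [abs_coe, hx]; simp
    simp only [Finset.mem_singleton]
    apply Subtype.ext
    simpa using this
  have h2 : (Lfin 0).card ≤ 1 := by simpa using Finset.card_le_card h1
  have h3 := NL_pos 0
  rw [NL] at h3 ⊢
  omega

lemma NL_lower (m : ℕ) : 2 ^ m * 2 ^ m ≤ NL (m + 1) := by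
  classical
  set s := Finset.range (2 ^ m) ×ˢ Finset.range (2 ^ m) with hs
  let F : ℕ × ℕ → ↥Sstar := fun p =>
    if h : p.2 ≤ 2 ^ m + p.1 then ⟨pt (2 ^ m + p.1) p.2, pt_mem_Sstar h⟩
    else ⟨0, zero_mem_Sstar⟩
  have hcoe : ∀ p ∈ s, (F p : ℂ) = pt (2 ^ m + p.1) p.2 ∧ p.2 ≤ 2 ^ m + p.1 := by
    rintro ⟨i, j⟩ hp
    rw [hs, Finset.mem_product, Finset.mem_range, Finset.mem_range] at hp
    have h : j ≤ 2 ^ m + i := by omega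
    constructor
    · simp only [F, dif_pos h]
    · exact h
  have hF : ∀ p ∈ s, F p ∈ Lfin (m + 1) := by
    rintro ⟨i, j⟩ hp
    obtain ⟨hcoe', hle⟩ := hcoe _ hp
    rw [hs, Finset.mem_product, Finset.mem_range, Finset.mem_range] at hp
    rw [mem_Lfin, levx, hcoe', nn_pt]
    apply lev'_eq (by omega)
    have h2 : (2:ℕ) ^ (m + 1) = 2 ^ m + 2 ^ m := by rw [pow_succ]; omega
    omega
  have hinj : Set.InjOn F ↑s := by
    rintro ⟨i, j⟩ hp ⟨i', j'⟩ hp' heq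
    obtain ⟨hc, hl⟩ := hcoe _ hp
    obtain ⟨hc', hl'⟩ := hcoe _ hp'
    have hco : pt (2 ^ m + i) j = pt (2 ^ m + i') j' := by
      rw [← hc, ← hc', heq]
    have hn : 2 ^ m + i = 2 ^ m + i' := by
      have h1 := abs_pt (2 ^ m + i) j
      rw [hco, abs_pt] at h1
      exact_mod_cast h1.symm
    have hi : i = i' := by omega
    subst hi
    have hj : j = j' := pt_inj hl (by omega) hco
    simp [hj]
  have := Finset.card_le_card_of_injOn F hF hinj
  simpa [hs, NL] using this

noncomputable def gflux (x y : ↥Sstar) : ℝ :=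
  if levx y = levx x + 1 then ((NL (levx x) : ℝ) * (NL (levx y) : ℝ))⁻¹ else 0

noncomputable def fflux (x y : ↥Sstar) : ℝ := gflux x y - gflux y x

lemma fflux_anti (x y : ↥Sstar) : fflux x y = - fflux y x := by
  rw [fflux, fflux]; ring

lemma fflux_support {x y : ↥Sstar} (h : fflux x y ≠ 0) :
    y ∈ Lfin (levx x + 1) ∪ Lfin (levx x - 1) := by
  rw [fflux] at h
  by_cases h1 : levx y = levx x + 1
  · exact Finset.mem_union_left _ (mem_Lfin.2 h1)
  · rw [gflux, if_neg h1] at h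
    by_cases h2 : levx x = levx y + 1
    · refine Finset.mem_union_right _ (mem_Lfin.2 ?_)
      omega
    · rw [gflux, if_neg h2] at h
      simp at h

lemma summable_fflux_abs (x : ↥Sstar) : Summable (fun y : ↥Sstar => |fflux x y|) := by
  apply summable_of_ne_finset_zero (s := Lfin (levx x + 1) ∪ Lfin (levx x - 1))
  intro y hy
  rw [abs_eq_zero]
  by_contra h
  exact hy (fflux_support h)

lemma disj_Lfin (m : ℕ) : Disjoint (Lfin (m + 1)) (Lfin (m - 1)) := by
  rw [Finset.disjoint_left]
  intro a ha hb
  rw [mem_Lfin] at ha hb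
  omega

lemma tsum_fflux (x : ↥Sstar) :
    ∑' y : ↥Sstar, fflux x y = if levx x = 0 then 1 else 0 := by
  obtain ⟨m, hm⟩ : ∃ m, levx x = m := ⟨_, rfl⟩
  rw [hm]
  rw [tsum_eq_sum (s := Lfin (m + 1) ∪ Lfin (m - 1))
    (fun y hy => by by_contra h; exact hy (by simpa [hm] using fflux_support h))]
  rw [Finset.sum_union (disj_Lfin m)]
  have hNm : (NL m : ℝ) ≠ 0 := Nat.cast_ne_zero.2 (NL_pos m).ne'
  have hNm1 : (NL (m + 1) : ℝ) ≠ 0 := Nat.cast_ne_zero.2 (NL_pos (m + 1)).ne'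
  have hcard1 : (Lfin (m + 1)).card = NL (m + 1) := rfl
  have hsum1 : ∑ y ∈ Lfin (m + 1), fflux x y = (NL m : ℝ)⁻¹ := by
    have hconst : ∀ y ∈ Lfin (m + 1), fflux x y = ((NL m : ℝ) * (NL (m + 1) : ℝ))⁻¹ := by
      intro y hy
      have hy' : levx y = m + 1 := mem_Lfin.1 hy
      rw [fflux, gflux, gflux, hm, hy', if_pos rfl, if_neg (by omega), sub_zero]
    rw [Finset.sum_congr rfl hconst, Finset.sum_const, nsmul_eq_mul, hcard1]
    field_simp
  rw [hsum1]
  rcases Nat.eq_zero_or_pos m with hm0 | hmpos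
  · subst hm0
    rw [if_pos rfl]
    have hsum2 : ∑ y ∈ Lfin (0 - 1), fflux x y = 0 := by
      apply Finset.sum_eq_zero
      intro y hy
      have hy' : levx y = 0 - 1 := mem_Lfin.1 hy
      rw [fflux, gflux, gflux, hm, hy']
      simp
    rw [hsum2, NL_zero]
    norm_num
  · rw [if_neg (by omega)]
    obtain ⟨m', rfl⟩ : ∃ m', m = m' + 1 := ⟨m - 1, by omega⟩
    have hNm' : (NL m' : ℝ) ≠ 0 := Nat.cast_ne_zero.2 (NL_pos m').ne'
    have hcard2 : (Lfin m').card = NL m' := rfl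
    have hsum2 : ∑ y ∈ Lfin (m' + 1 - 1), fflux x y = -(NL (m' + 1) : ℝ)⁻¹ := by
      have hconst : ∀ y ∈ Lfin m', fflux x y = -((NL m' : ℝ) * (NL (m' + 1) : ℝ))⁻¹ := by
        intro y hy
        have hy' : levx y = m' := mem_Lfin.1 hy
        rw [fflux, gflux, gflux, hm, hy', if_neg (by omega), if_pos (by omega), zero_sub]
      simp only [Nat.add_sub_cancel]
      rw [Finset.sum_congr rfl hconst, Finset.sum_const, nsmul_eq_mul, hcard2]
      field_simp
    rw [hsum2]
    ring

noncomputable def hmaj (α : ℝ) (x : ↥Sstar) : ℝ :=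
  1024 * (2 : ℝ) ^ ((α - 6) / 2 * (levx x : ℝ))

lemma hmaj_pos (α : ℝ) (x : ↥Sstar) : 0 < hmaj α x := by
  rw [hmaj]; positivity

lemma nat_succ_le_pow_lev' (n : ℕ) : ((n : ℝ) + 1) ≤ (2 : ℝ) ^ ((lev' n : ℕ) : ℝ) := by
  rw [Real.rpow_natCast]
  have h := lt_pow_lev' n
  have : (n : ℝ) + 1 ≤ ((2 ^ lev' n : ℕ) : ℝ) := by exact_mod_cast h
  simpa using this

lemma pow_factor_le (α : ℝ) (hα2 : α < 2) (n : ℕ) :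
    (2 : ℝ) ^ ((α - 6) / 2 * (lev' n : ℝ)) ≤ ((n : ℝ) + 1) ^ ((α - 6) / 2) := by
  have hb : (0 : ℝ) < (n : ℝ) + 1 := by positivity
  have h1 := nat_succ_le_pow_lev' n
  have h2 : (2 : ℝ) ^ ((α - 6) / 2 * (lev' n : ℝ))
      = ((2 : ℝ) ^ ((lev' n : ℕ) : ℝ)) ^ ((α - 6) / 2) := by
    rw [← Real.rpow_mul (by norm_num), mul_comm]
  rw [h2]
  exact Real.rpow_le_rpow_of_nonpos hb h1 (by linarith)

lemma summable_hmaj (α : ℝ) (hα2 : α < 2) : Summable (hmaj α) := by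
  classical
  set h' : ℕ × ℕ → ℝ := fun p =>
    if p.2 ≤ p.1 then 1024 * (2 : ℝ) ^ ((α - 6) / 2 * (lev' p.1 : ℝ)) else 0 with hh'
  have hnonneg : 0 ≤ h' := by
    intro p
    rw [hh']
    dsimp only
    split <;> positivity
  have hfib : ∀ n : ℕ, (fun k => h' (n, k)) = fun k =>
      if k ∈ Finset.range (n + 1) then 1024 * (2 : ℝ) ^ ((α - 6) / 2 * (lev' n : ℝ)) else 0 := by
    intro n
    funext k
    rw [hh']
    simp only [Finset.mem_range]
    congr 1
    simp [Nat.lt_succ_iff]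
  have hfibsum : ∀ n : ℕ, Summable (fun k => h' (n, k)) := by
    intro n
    rw [hfib n]
    apply summable_of_ne_finset_zero (s := Finset.range (n + 1))
    intro k hk
    rw [if_neg hk]
  have htsum : ∀ n : ℕ, ∑' k, h' (n, k)
      = ((n : ℝ) + 1) * (1024 * (2 : ℝ) ^ ((α - 6) / 2 * (lev' n : ℝ))) := by
    intro n
    rw [hfib n, tsum_eq_sum (s := Finset.range (n + 1)) (fun k hk => by rw [if_neg hk])]
    rw [Finset.sum_ite_mem, Finset.inter_self, Finset.sum_const, Finset.card_range,
      nsmul_eq_mul]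
    push_cast
    ring
  have houter : Summable (fun n : ℕ => ∑' k, h' (n, k)) := by
    refine Summable.of_nonneg_of_le (f := fun n : ℕ => 1024 * ((n : ℝ) + 1) ^ ((α - 4) / 2))
      (fun n => ?_) (fun n => ?_) ?_
    · rw [htsum n]; positivity
    · rw [htsum n]
      have h1 := pow_factor_le α hα2 n
      have hb : (0 : ℝ) < (n : ℝ) + 1 := by positivity
      have h2 : ((n : ℝ) + 1) * ((n : ℝ) + 1) ^ ((α - 6) / 2) = ((n : ℝ) + 1) ^ ((α - 4) / 2) := by
        nth_rewrite 1 [← Real.rpow_one ((n : ℝ) + 1)]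
        rw [← Real.rpow_add hb]
        congr 1
        ring
      calc ((n : ℝ) + 1) * (1024 * (2 : ℝ) ^ ((α - 6) / 2 * (lev' n : ℝ)))
          ≤ ((n : ℝ) + 1) * (1024 * ((n : ℝ) + 1) ^ ((α - 6) / 2)) := by
            apply mul_le_mul_of_nonneg_left _ (by positivity)
            apply mul_le_mul_of_nonneg_left h1 (by norm_num)
        _ = 1024 * ((n : ℝ) + 1) ^ ((α - 4) / 2) := by rw [← h2]; ring
    · apply Summable.mul_left
      have hs : ((α - 4) / 2) < -1 := by linarith
      have := (summable_nat_add_iff 1).2 (Real.summable_nat_rpow.2 hs)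
      apply this.congr
      intro n
      push_cast
      ring_nf
  have hsum' : Summable h' := (summable_prod_of_nonneg hnonneg).2 ⟨hfibsum, houter⟩
  have hcomp : hmaj α = h' ∘ rep := by
    funext x
    rw [Function.comp_apply, hh', hmaj]
    dsimp only
    rw [if_pos (rep_spec x).1]
    congr 2
    rw [levx, nn_coe]
  rw [hcomp]
  exact hsum'.comp_injective rep_injective

lemma NL_lower_nat (m : ℕ) : 2 ^ (2 * m) ≤ 4 * NL m := by
  rcases Nat.eq_zero_or_pos m with rfl | hm
  · have := NL_pos 0
    simp only [Nat.mul_zero, pow_zero]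
    omega
  · obtain ⟨m', rfl⟩ : ∃ m', m = m' + 1 := ⟨m - 1, by omega⟩
    have h := NL_lower m'
    have h4 : 2 ^ (2 * (m' + 1)) = 2 ^ m' * 2 ^ m' * 4 := by ring
    omega

lemma rpow_two_eq : (2 : ℝ) ^ (2 : ℝ) = 4 := by
  have h : (2 : ℝ) ^ (((2 : ℕ)) : ℝ) = 4 := by rw [Real.rpow_natCast]; norm_num
  simpa using h

lemma rpow_ten_eq : (2 : ℝ) ^ (10 : ℝ) = 1024 := by
  have h : (2 : ℝ) ^ (((10 : ℕ)) : ℝ) = 1024 := by rw [Real.rpow_natCast]; norm_num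
  simpa using h

lemma NL_inv_le (m : ℕ) : ((NL m : ℝ))⁻¹ ≤ (2 : ℝ) ^ (2 - 2 * (m : ℝ)) := by
  have hpos : (0 : ℝ) < NL m := by exact_mod_cast NL_pos m
  have h2 : ((2 ^ (2 * m) : ℕ) : ℝ) ≤ 4 * NL m := by exact_mod_cast NL_lower_nat m
  have h3 : (2 : ℝ) ^ (2 * (m : ℝ)) = ((2 ^ (2 * m) : ℕ) : ℝ) := by
    push_cast
    rw [← Real.rpow_natCast 2 (2 * m)]
    push_cast
    ring_nf
  have h1 : (2 : ℝ) ^ (2 * (m : ℝ) - 2) ≤ NL m := by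
    rw [Real.rpow_sub two_pos, rpow_two_eq, h3, div_le_iff₀ (by norm_num : (0:ℝ) < 4)]
    linarith
  calc ((NL m : ℝ))⁻¹ ≤ ((2 : ℝ) ^ (2 * (m : ℝ) - 2))⁻¹ :=
        inv_anti₀ (Real.rpow_pos_of_pos two_pos _) h1
    _ = (2 : ℝ) ^ (2 - 2 * (m : ℝ)) := by
        rw [← Real.rpow_neg (by norm_num)]
        congr 1
        ring

lemma core_bound (α : ℝ) (hα0 : 0 < α) (hα2 : α < 2) {x y : ↥Sstar} {m : ℕ}
    (hx : levx x = m) (hy : levx y = m + 1) :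
    max 1 (‖(x : ℂ) - (y : ℂ)‖ ^ (2 + α)) * (((NL m : ℝ) * (NL (m + 1) : ℝ))⁻¹) ^ 2
      ≤ hmaj α x * hmaj α y := by
  have habsx : ‖(x : ℂ)‖ ≤ (2 : ℝ) ^ ((m : ℝ)) := by
    have h1 : nn (x : ℂ) < 2 ^ lev' (nn (x : ℂ)) := lt_pow_lev' _
    have h2 : lev' (nn (x : ℂ)) = m := hx
    rw [h2] at h1
    rw [abs_coe, Real.rpow_natCast]
    exact_mod_cast h1.le
  have habsy : ‖(y : ℂ)‖ ≤ (2 : ℝ) ^ ((m : ℝ) + 1) := by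
    have h1 : nn (y : ℂ) < 2 ^ lev' (nn (y : ℂ)) := lt_pow_lev' _
    have h2 : lev' (nn (y : ℂ)) = m + 1 := hy
    rw [h2] at h1
    rw [abs_coe]
    have he : (2 : ℝ) ^ ((m : ℝ) + 1) = ((2 ^ (m + 1) : ℕ) : ℝ) := by
      push_cast
      rw [← Real.rpow_natCast 2 (m + 1)]
      push_cast
      ring_nf
    rw [he]
    exact_mod_cast h1.le
  have hd : ‖(x : ℂ) - (y : ℂ)‖ ≤ (2 : ℝ) ^ ((m : ℝ) + 2) := by
    have htri : ‖(x : ℂ) - (y : ℂ)‖ ≤ ‖(x : ℂ)‖ + ‖(y : ℂ)‖ := by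
      exact norm_sub_le (x : ℂ) (y : ℂ)
    have hpow : (2 : ℝ) ^ ((m : ℝ) + 1) = 2 * (2 : ℝ) ^ ((m : ℝ)) := by
      rw [Real.rpow_add two_pos, Real.rpow_one]; ring
    have hpow2 : (2 : ℝ) ^ ((m : ℝ) + 2) = 4 * (2 : ℝ) ^ ((m : ℝ)) := by
      rw [Real.rpow_add two_pos, rpow_two_eq]; ring
    have hmp : (0 : ℝ) < (2 : ℝ) ^ ((m : ℝ)) := Real.rpow_pos_of_pos two_pos _
    linarith
  have hmax : max 1 (‖(x : ℂ) - (y : ℂ)‖ ^ (2 + α))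
      ≤ (2 : ℝ) ^ (((m : ℝ) + 2) * (2 + α)) := by
    rw [Real.rpow_mul (by norm_num)]
    apply max_le
    · exact Real.one_le_rpow (Real.one_le_rpow one_le_two (by positivity)) (by linarith)
    · exact Real.rpow_le_rpow (norm_nonneg _) hd (by linarith)
  have hinv1 := NL_inv_le m
  have hinv2 := NL_inv_le (m + 1)
  push_cast at hinv2
  have hfle : ((NL m : ℝ) * (NL (m + 1) : ℝ))⁻¹ ≤ (2 : ℝ) ^ (2 - 4 * (m : ℝ)) := by
    rw [mul_inv]
    calc (NL m : ℝ)⁻¹ * (NL (m + 1) : ℝ)⁻¹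
        ≤ (2 : ℝ) ^ (2 - 2 * (m : ℝ)) * (2 : ℝ) ^ (2 - 2 * ((m : ℝ) + 1)) :=
          mul_le_mul hinv1 hinv2 (by positivity) (by positivity)
      _ = (2 : ℝ) ^ (2 - 4 * (m : ℝ)) := by
          rw [← Real.rpow_add two_pos]
          congr 1
          ring
  have hfle2 : (((NL m : ℝ) * (NL (m + 1) : ℝ))⁻¹) ^ 2 ≤ ((2 : ℝ) ^ (2 - 4 * (m : ℝ))) ^ 2 :=
    pow_le_pow_left₀ (by positivity) hfle 2
  have hL : max 1 (‖(x : ℂ) - (y : ℂ)‖ ^ (2 + α))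
        * (((NL m : ℝ) * (NL (m + 1) : ℝ))⁻¹) ^ 2
      ≤ (2 : ℝ) ^ (((m : ℝ) + 2) * (2 + α)) * ((2 : ℝ) ^ (2 - 4 * (m : ℝ))) ^ 2 :=
    mul_le_mul hmax hfle2 (by positivity) (by positivity)
  have hR : hmaj α x * hmaj α y
      = (2 : ℝ) ^ ((10 : ℝ)) * (2 : ℝ) ^ ((α - 6) / 2 * (m : ℝ))
        * ((2 : ℝ) ^ ((10 : ℝ)) * (2 : ℝ) ^ ((α - 6) / 2 * ((m : ℝ) + 1))) := by
    rw [hmaj, hmaj, hx, hy, rpow_ten_eq]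
    push_cast
    ring
  calc max 1 (‖(x : ℂ) - (y : ℂ)‖ ^ (2 + α))
        * (((NL m : ℝ) * (NL (m + 1) : ℝ))⁻¹) ^ 2
      ≤ (2 : ℝ) ^ (((m : ℝ) + 2) * (2 + α)) * ((2 : ℝ) ^ (2 - 4 * (m : ℝ))) ^ 2 := hL
    _ ≤ hmaj α x * hmaj α y := by
        rw [hR]
        rw [← Real.rpow_natCast ((2 : ℝ) ^ (2 - 4 * (m : ℝ))) 2,
          ← Real.rpow_mul (show (0:ℝ) ≤ 2 by norm_num)]
        simp only [← Real.rpow_add (show (0:ℝ) < 2 by norm_num)]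
        apply Real.rpow_le_rpow_of_exponent_le (by norm_num : (1:ℝ) ≤ 2)
        push_cast
        nlinarith []

lemma pair_bound (α : ℝ) (hα0 : 0 < α) (hα2 : α < 2) (x y : ↥Sstar) :
    max 1 (‖(x : ℂ) - (y : ℂ)‖ ^ (2 + α)) * (fflux x y) ^ 2
      ≤ hmaj α x * hmaj α y := by
  by_cases hxy : levx y = levx x + 1
  · have hval : fflux x y = ((NL (levx x) : ℝ) * (NL (levx x + 1) : ℝ))⁻¹ := by
      rw [fflux, gflux, gflux, if_pos hxy, if_neg (by omega), sub_zero, hxy]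
    rw [hval]
    exact core_bound α hα0 hα2 rfl hxy
  · by_cases hyx : levx x = levx y + 1
    · have hval : fflux x y = -(((NL (levx y) : ℝ) * (NL (levx y + 1) : ℝ))⁻¹) := by
        rw [fflux, gflux, gflux, if_neg hxy, if_pos hyx, zero_sub, hyx]
      have habs : ‖(x : ℂ) - (y : ℂ)‖ = ‖(y : ℂ) - (x : ℂ)‖ :=
        norm_sub_rev _ _
      rw [hval, neg_sq, habs]
      calc max 1 (‖(y : ℂ) - (x : ℂ)‖ ^ (2 + α))
            * (((NL (levx y) : ℝ) * (NL (levx y + 1) : ℝ))⁻¹) ^ 2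
          ≤ hmaj α y * hmaj α x := core_bound α hα0 hα2 rfl hyx
        _ = hmaj α x * hmaj α y := mul_comm _ _
    · have hz : fflux x y = 0 := by
        rw [fflux, gflux, gflux, if_neg hxy, if_neg hyx, sub_zero]
      rw [hz]
      rw [zero_pow (by norm_num), mul_zero]
      exact le_of_lt (mul_pos (hmaj_pos α x) (hmaj_pos α y))

lemma coe_eq_zero_iff (x : ↥Sstar) : (x : ℂ) = 0 ↔ levx x = 0 := by
  rw [levx, lev'_eq_zero_iff]
  constructor
  · intro h
    rw [nn, h]
    simp
  · intro h
    have h2 := abs_coe x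
    rw [h] at h2
    simpa using h2


/-- for `α ∈ (0,2)` there is a unit flux from `0 ∈ S_*` to infinity of
finite energy for the resistances `r(x,y) = max(1, |x−y|^{2+α})`. -/
theorem transience_Sstar (α : ℝ) (hα0 : 0 < α) (hα2 : α < 2) :
    ∃ f : Sstar → Sstar → ℝ,
      (∀ x y : Sstar, f x y = - f y x) ∧
      (∀ x : Sstar, Summable (fun y : Sstar => |f x y|)) ∧
      (∀ x : Sstar, ∑' y : Sstar, f x y = if (x : ℂ) = 0 then 1 else 0) ∧
      Summable (fun p : Sstar × Sstar =>
        max 1 (‖(p.1 : ℂ) - (p.2 : ℂ)‖ ^ (2 + α)) * f p.1 p.2 ^ 2) := by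
  refine ⟨fflux, fflux_anti, summable_fflux_abs, ?_, ?_⟩
  · intro x
    rw [tsum_fflux]
    by_cases h : levx x = 0
    · rw [if_pos h, if_pos ((coe_eq_zero_iff x).2 h)]
    · rw [if_neg h, if_neg (fun hc => h ((coe_eq_zero_iff x).1 hc))]
  · have hH : Summable (fun p : ↥Sstar × ↥Sstar => hmaj α p.1 * hmaj α p.2) :=
      Summable.mul_of_nonneg (summable_hmaj α hα2) (summable_hmaj α hα2)
        (fun z => (hmaj_pos α z).le) (fun z => (hmaj_pos α z).le)
    have hnn : ∀ p : ↥Sstar × ↥Sstar,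
        0 ≤ max 1 (‖(p.1 : ℂ) - (p.2 : ℂ)‖ ^ (2 + α)) * fflux p.1 p.2 ^ 2 :=
      fun p => mul_nonneg (le_trans zero_le_one (le_max_left _ _)) (sq_nonneg _)
    have hle : ∀ p : ↥Sstar × ↥Sstar,
        max 1 (‖(p.1 : ℂ) - (p.2 : ℂ)‖ ^ (2 + α)) * fflux p.1 p.2 ^ 2
          ≤ hmaj α p.1 * hmaj α p.2 := fun p => pair_bound α hα0 hα2 p.1 p.2
    exact Summable.of_nonneg_of_le hnn hle hH
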